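/- arXiv:1412.1242 — 4 statements merged into one kernel-verified Lean document; each statement's English description precedes it below -/
import Mathlib

section
/- Let (X,ℬ,m,T) be an invertible, conservative, ergodic, measure-preserving transformation with m(X)=∞. Then T is two-sided boundedly rationally ergodic if and only if T is (one-sided) boundedly rationally ergodic. -/
open MeasureTheory Filter Set
open scoped ENNReal Topology

noncomputable section

/-- One-sided Birkhoff sum `S_n(f)(x) = ∑_{k=0}^{n-1} f (T^k x)`. -/
def birkhoffS {X : Type*} (T : X → X) (f : X → ℝ) (n : ℕ) (x : X) : ℝ :=
  ∑ k ∈ Finset.range n, f (T^[k] x)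

/-- Symmetric Birkhoff sum `Σ_n(f)(x) = ∑_{|k|<n} f (T^k x)`, where `T'` is the inverse
of the invertible transformation `T`. -/
def birkhoffSym {X : Type*} (T T' : X → X) (f : X → ℝ) (n : ℕ) (x : X) : ℝ :=
  ∑ k ∈ Finset.range n, f (T^[k] x) + ∑ k ∈ Finset.Icc 1 (n - 1), f (T'^[k] x)

/-- The return sequence `a_n(A) = (1/m(A)²) ∑_{k=0}^{n-1} m (A ∩ T^{-k} A)`. -/
def aSeq {X : Type*} [MeasurableSpace X] (T : X → X) (m : MeasureTheory.Measure X)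
    (A : Set X) (n : ℕ) : ℝ :=
  (∑ k ∈ Finset.range n, (m (A ∩ (T^[k]) ⁻¹' A)).toReal) / (m A).toReal ^ 2

/-- The two-sided return sequence `ā_n(A) = (1/m(A)²) ∑_{|k|≤n} m (A ∩ T^k A)`,
where `T'` is the inverse of `T` (so that `T^k A = (T'^k)⁻¹ A` for `k ≥ 0`). -/
def aSeqSym {X : Type*} [MeasurableSpace X] (T T' : X → X) (m : MeasureTheory.Measure X)
    (A : Set X) (n : ℕ) : ℝ :=
  ((m A).toReal + ∑ k ∈ Finset.Icc 1 n,
      ((m (A ∩ (T'^[k]) ⁻¹' A)).toReal + (m (A ∩ (T^[k]) ⁻¹' A)).toReal)) /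
    (m A).toReal ^ 2

/-- `T` is boundedly rationally ergodic (BRE): there are `A` of positive finite measure
and `M < ∞` with `S_n(1_A) ≤ M a_n(A)` a.e. on `A` for all `n ≥ 1`. -/
def BddRatErg {X : Type*} [MeasurableSpace X] (T : X → X)
    (m : MeasureTheory.Measure X) : Prop :=
  ∃ A : Set X, MeasurableSet A ∧ 0 < m A ∧ m A < ⊤ ∧
    ∃ M : ℝ, ∀ n : ℕ, 1 ≤ n →
      ∀ᵐ x ∂(m.restrict A), birkhoffS T (A.indicator 1) n x ≤ M * aSeq T m A n

/-- `T` is two-sided boundedly rationally ergodic: there are `A` of positive finite measure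
and `M < ∞` with `Σ_n(1_A) ≤ M ā_n(A)` a.e. on `A` for all `n ≥ 1`. -/
def TwoSidedBRE {X : Type*} [MeasurableSpace X] (T T' : X → X)
    (m : MeasureTheory.Measure X) : Prop :=
  ∃ A : Set X, MeasurableSet A ∧ 0 < m A ∧ m A < ⊤ ∧
    ∃ M : ℝ, ∀ n : ℕ, 1 ≤ n →
      ∀ᵐ x ∂(m.restrict A), birkhoffSym T T' (A.indicator 1) n x ≤ M * aSeqSym T T' m A n

/-- `tailSup g n = sup_{N ≥ n} g N`. -/
def tailSup (g : ℕ → ℝ) (n : ℕ) : ℝ := sSup (g '' Set.Ici n)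

section Aux
variable {X : Type*} [MeasurableSpace X] {m : Measure X} {T T' : X → X} {A : Set X}

lemma mp_inv (hm : MeasurePreserving T m m) (hT'meas : Measurable T')
    (hinv₁ : Function.LeftInverse T' T) : MeasurePreserving T' m m := by
  refine ⟨hT'meas, ?_⟩
  conv_lhs => rw [← hm.map_eq]
  rw [Measure.map_map hT'meas hm.measurable, hinv₁.comp_eq_id, Measure.map_id]

lemma sym_measure (hm : MeasurePreserving T m m) (hT'meas : Measurable T')
    (hinv₁ : Function.LeftInverse T' T) (hA : MeasurableSet A) (k : ℕ) :
    m (A ∩ (T'^[k]) ⁻¹' A) = m (A ∩ (T^[k]) ⁻¹' A) := by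
  have h1 : (T^[k]) ⁻¹' (A ∩ (T'^[k]) ⁻¹' A) = (T^[k]) ⁻¹' A ∩ A := by
    ext x
    simp only [Set.mem_preimage, Set.mem_inter_iff, (hinv₁.iterate k) x]
    try tauto
  calc m (A ∩ (T'^[k]) ⁻¹' A)
      = m ((T^[k]) ⁻¹' (A ∩ (T'^[k]) ⁻¹' A)) :=
        ((hm.iterate k).measure_preimage
          (hA.inter ((hT'meas.iterate k) hA)).nullMeasurableSet).symm
    _ = m ((T^[k]) ⁻¹' A ∩ A) := by rw [h1]
    _ = m (A ∩ (T^[k]) ⁻¹' A) := by rw [Set.inter_comm]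

lemma range_eq_zero_add_Icc (f : ℕ → ℝ) {n : ℕ} (hn : 1 ≤ n) :
    ∑ k ∈ Finset.range n, f k = f 0 + ∑ k ∈ Finset.Icc 1 (n-1), f k := by
  obtain ⟨p, rfl⟩ : ∃ p, n = p + 1 := ⟨n-1, by omega⟩
  rw [Finset.sum_range_succ', show Finset.Icc 1 (p + 1 - 1) = Finset.Ico 1 (p+1) by
    simp only [Nat.add_sub_cancel]; rw [Finset.Ico_add_one_right_eq_Icc]
  , Finset.sum_Ico_eq_sum_range]
  simp [add_comm]

lemma aSeqSym_eq (hm : MeasurePreserving T m m) (hT'meas : Measurable T')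
    (hinv₁ : Function.LeftInverse T' T) (hA : MeasurableSet A) (n : ℕ) :
    aSeqSym T T' m A n =
      ((m A).toReal + 2 * ∑ k ∈ Finset.Icc 1 n, (m (A ∩ (T^[k]) ⁻¹' A)).toReal) /
        (m A).toReal ^ 2 := by
  unfold aSeqSym
  congr 1
  rw [Finset.mul_sum]
  congr 1
  apply Finset.sum_congr rfl
  intro k _
  rw [sym_measure hm hT'meas hinv₁ hA k]
  ring

lemma backward_indicator_sum (hinv₂ : Function.RightInverse T' T)
    {x : X} {n : ℕ} (hn : 1 ≤ n) (hx : x ∈ A) :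
    ∃ j : ℕ, j < n ∧ T'^[j] x ∈ A ∧
      ∑ k ∈ Finset.range n, A.indicator (1 : X → ℝ) (T'^[k] x)
        = birkhoffS T (A.indicator 1) (j+1) (T'^[j] x) := by
  classical
  set K := (Finset.range n).filter (fun k => T'^[k] x ∈ A) with hK
  have h0K : 0 ∈ K := by
    simp only [hK, Finset.mem_filter, Finset.mem_range, Function.iterate_zero, id]
    exact ⟨by omega, hx⟩
  have hKne : K.Nonempty := ⟨0, h0K⟩
  set j := K.max' hKne with hj
  have hjK : j ∈ K := K.max'_mem hKne
  have hjn : j < n := Finset.mem_range.mp (Finset.mem_filter.mp hjK).1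
  have hjA : T'^[j] x ∈ A := (Finset.mem_filter.mp hjK).2
  refine ⟨j, hjn, hjA, ?_⟩
  have hzero : ∀ k ∈ Finset.Ico (j+1) n, A.indicator (1:X→ℝ) (T'^[k] x) = 0 := by
    intro k hk
    rw [Finset.mem_Ico] at hk
    apply Set.indicator_of_notMem
    intro hkA
    have hkK : k ∈ K := Finset.mem_filter.mpr ⟨Finset.mem_range.mpr hk.2, hkA⟩
    have := K.le_max' k hkK
    omega
  have hsplit : ∑ k ∈ Finset.range n, A.indicator (1:X→ℝ) (T'^[k] x)
      = ∑ k ∈ Finset.range (j+1), A.indicator (1:X→ℝ) (T'^[k] x) := by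
    rw [Finset.range_eq_Ico, ← Finset.sum_Ico_consecutive _ (Nat.zero_le (j+1)) hjn,
      ← Finset.range_eq_Ico, Finset.sum_eq_zero hzero, add_zero]
  rw [hsplit]
  unfold birkhoffS
  rw [← Finset.sum_range_reflect (fun k => A.indicator (1:X→ℝ) (T'^[k] x)) (j+1)]
  apply Finset.sum_congr rfl
  intro i hi
  have hij : i ≤ j := by
    have := Finset.mem_range.mp hi; omega
  congr 1
  have h1 : j + 1 - 1 - i = j - i := by omega
  rw [h1]
  have h2 : T'^[j] x = T'^[i] (T'^[j-i] x) := by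
    rw [← Function.iterate_add_apply]
    congr 1; omega
  rw [h2, (hinv₂.iterate i) (T'^[j-i] x)]

end Aux

/-- For an invertible, conservative, ergodic, measure-preserving transformation of an
infinite σ-finite measure space, two-sided bounded rational ergodicity is equivalent to
(one-sided) bounded rational ergodicity. -/
theorem twoSidedBRE_iff_BRE
    {X : Type*} [MeasurableSpace X] (m : Measure X) [SigmaFinite m]
    (T T' : X → X) (hT'meas : Measurable T')
    (hinv₁ : Function.LeftInverse T' T) (hinv₂ : Function.RightInverse T' T)
    (hT : Ergodic T m) (hcons : Conservative T m) (hXinf : m Set.univ = ⊤) :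
    TwoSidedBRE T T' m ↔ BddRatErg T m := by
  have hm : MeasurePreserving T m m := hT.toMeasurePreserving
  constructor
  · -- TwoSidedBRE → BRE
    rintro ⟨A, hA, hApos, hAfin, M, hM⟩
    refine ⟨A, hA, hApos, hAfin, 4 * M, ?_⟩
    have hc : 0 < (m A).toReal := ENNReal.toReal_pos hApos.ne' hAfin.ne
    set r : ℕ → ℝ := fun k => (m (A ∩ (T^[k]) ⁻¹' A)).toReal with hrdef
    have hrnn : ∀ k, 0 ≤ r k := fun k => ENNReal.toReal_nonneg
    have hrle : ∀ k, r k ≤ (m A).toReal := fun k =>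
      ENNReal.toReal_mono hAfin.ne (measure_mono Set.inter_subset_left)
    have hr0 : r 0 = (m A).toReal := by simp [hrdef]
    have hsym : ∀ n, aSeqSym T T' m A n
        = ((m A).toReal + 2 * ∑ k ∈ Finset.Icc 1 n, r k) / (m A).toReal ^ 2 :=
      aSeqSym_eq hm hT'meas hinv₁ hA
    have haseq : ∀ n, aSeq T m A n = (∑ k ∈ Finset.range n, r k) / (m A).toReal ^ 2 :=
      fun n => rfl
    have hs1 : ∀ p : ℕ, ∑ k ∈ Finset.range (p+1), r k
        = (m A).toReal + ∑ k ∈ Finset.Icc 1 p, r k := by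
      intro p
      have h := range_eq_zero_add_Icc r (show (1:ℕ) ≤ p+1 by omega)
      simpa [hr0] using h
    have h2 : ∀ n, aSeqSym T T' m A n ≤ 2 * aSeq T m A (n+1) := by
      intro n
      rw [hsym, haseq, hs1, ← mul_div_assoc, div_le_div_iff_of_pos_right (by positivity)]
      have hIcc : (0:ℝ) ≤ ∑ k ∈ Finset.Icc 1 n, r k :=
        Finset.sum_nonneg fun k _ => hrnn k
      linarith
    have h3 : ∀ n, 1 ≤ n → aSeq T m A (n+1) ≤ 2 * aSeq T m A n := by
      intro n hn
      rw [haseq, haseq, ← mul_div_assoc, div_le_div_iff_of_pos_right (by positivity)]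
      have hsucc : ∑ k ∈ Finset.range (n+1), r k = ∑ k ∈ Finset.range n, r k + r n :=
        Finset.sum_range_succ r n
      have hcle : r 0 ≤ ∑ k ∈ Finset.range n, r k :=
        Finset.single_le_sum (fun k _ => hrnn k) (Finset.mem_range.mpr (by omega))
      rw [hr0] at hcle
      have := hrle n
      linarith
    -- M > 0
    have hres : (m.restrict A) ≠ 0 := by
      intro h0
      have h1 : m.restrict A Set.univ = 0 := by rw [h0]; rfl
      rw [Measure.restrict_apply_univ] at h1
      exact hApos.ne' h1
    haveI : (ae (m.restrict A)).NeBot := ae_neBot.mpr hres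
    obtain ⟨x₀, hx₀, hx₀A⟩ := ((hM 1 le_rfl).and (ae_restrict_mem hA)).exists
    have hb1 : birkhoffSym T T' (A.indicator 1) 1 x₀ = 1 := by
      unfold birkhoffSym
      rw [show (1:ℕ) - 1 = 0 from rfl, Finset.Icc_eq_empty (by omega)]
      simp [Set.indicator_of_mem hx₀A]
    have hpos1 : 0 < aSeqSym T T' m A 1 := by
      rw [hsym]
      apply div_pos _ (by positivity)
      have : (0:ℝ) ≤ ∑ k ∈ Finset.Icc 1 1, r k := Finset.sum_nonneg fun k _ => hrnn k
      linarith
    have hMpos : 0 < M := by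
      rw [hb1] at hx₀
      nlinarith
    intro n hn
    filter_upwards [hM n hn] with x hx
    have hSle : birkhoffS T (A.indicator 1) n x ≤ birkhoffSym T T' (A.indicator 1) n x := by
      unfold birkhoffS birkhoffSym
      have : (0:ℝ) ≤ ∑ k ∈ Finset.Icc 1 (n-1), A.indicator (1:X→ℝ) (T'^[k] x) :=
        Finset.sum_nonneg fun k _ => Set.indicator_nonneg (fun _ _ => by norm_num) _
      linarith
    calc birkhoffS T (A.indicator 1) n x ≤ birkhoffSym T T' (A.indicator 1) n x := hSle
      _ ≤ M * aSeqSym T T' m A n := hx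
      _ ≤ M * (2 * aSeq T m A (n+1)) := mul_le_mul_of_nonneg_left (h2 n) hMpos.le
      _ ≤ M * (2 * (2 * aSeq T m A n)) := by
          apply mul_le_mul_of_nonneg_left _ hMpos.le
          linarith [h3 n hn]
      _ = 4 * M * aSeq T m A n := by ring
  · -- BRE → TwoSidedBRE
    rintro ⟨A, hA, hApos, hAfin, M, hM⟩
    refine ⟨A, hA, hApos, hAfin, 2 * M, ?_⟩
    have hc : 0 < (m A).toReal := ENNReal.toReal_pos hApos.ne' hAfin.ne
    set r : ℕ → ℝ := fun k => (m (A ∩ (T^[k]) ⁻¹' A)).toReal with hrdef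
    have hrnn : ∀ k, 0 ≤ r k := fun k => ENNReal.toReal_nonneg
    have hr0 : r 0 = (m A).toReal := by simp [hrdef]
    have hsym : ∀ n, aSeqSym T T' m A n
        = ((m A).toReal + 2 * ∑ k ∈ Finset.Icc 1 n, r k) / (m A).toReal ^ 2 :=
      aSeqSym_eq hm hT'meas hinv₁ hA
    have haseq : ∀ n, aSeq T m A n = (∑ k ∈ Finset.range n, r k) / (m A).toReal ^ 2 :=
      fun n => rfl
    have hs1 : ∀ p : ℕ, ∑ k ∈ Finset.range (p+1), r k
        = (m A).toReal + ∑ k ∈ Finset.Icc 1 p, r k := by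
      intro p
      have h := range_eq_zero_add_Icc r (show (1:ℕ) ≤ p+1 by omega)
      simpa [hr0] using h
    have hmono : ∀ j n : ℕ, j ≤ n → aSeq T m A j ≤ aSeq T m A n := by
      intro j n hjn
      rw [haseq, haseq, div_le_div_iff_of_pos_right (by positivity)]
      exact Finset.sum_le_sum_of_subset_of_nonneg (Finset.range_subset_range.mpr hjn)
        (fun k _ _ => hrnn k)
    have h1 : ∀ n, aSeq T m A n ≤ aSeqSym T T' m A n := by
      intro n
      rw [haseq, hsym, div_le_div_iff_of_pos_right (by positivity)]
      have hsub : ∑ k ∈ Finset.range n, r k ≤ ∑ k ∈ Finset.range (n+1), r k :=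
        Finset.sum_le_sum_of_subset_of_nonneg
          (Finset.range_subset_range.mpr (Nat.le_succ n)) (fun k _ _ => hrnn k)
      rw [hs1] at hsub
      have hIcc : (0:ℝ) ≤ ∑ k ∈ Finset.Icc 1 n, r k :=
        Finset.sum_nonneg fun k _ => hrnn k
      linarith
    -- M > 0
    have hres : (m.restrict A) ≠ 0 := by
      intro h0
      have hh : m.restrict A Set.univ = 0 := by rw [h0]; rfl
      rw [Measure.restrict_apply_univ] at hh
      exact hApos.ne' hh
    haveI : (ae (m.restrict A)).NeBot := ae_neBot.mpr hres
    obtain ⟨x₀, hx₀, hx₀A⟩ := ((hM 1 le_rfl).and (ae_restrict_mem hA)).exists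
    have hb1 : birkhoffS T (A.indicator 1) 1 x₀ = 1 := by
      unfold birkhoffS
      simp [Set.indicator_of_mem hx₀A]
    have hpos1 : 0 < aSeq T m A 1 := by
      rw [haseq]
      apply div_pos _ (by positivity)
      rw [Finset.sum_range_one, hr0]
      exact hc
    have hMpos : 0 < M := by
      rw [hb1] at hx₀
      nlinarith
    -- full a.e. statement and null-set machinery
    have hall : ∀ᵐ x ∂ m.restrict A, ∀ n, 1 ≤ n →
        birkhoffS T (A.indicator 1) n x ≤ M * aSeq T m A n := by
      rw [MeasureTheory.ae_all_iff]
      intro n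
      rcases Nat.lt_or_ge n 1 with h0 | hn1
      · exact Eventually.of_forall fun x hn => absurd hn (by omega)
      · filter_upwards [hM n hn1] with x hx _
        exact hx
    set Bad : Set X :=
      {x | ¬ ∀ n, 1 ≤ n → birkhoffS T (A.indicator 1) n x ≤ M * aSeq T m A n} with hBadDef
    have hBadnull : m (Bad ∩ A) = 0 := by
      have h := hall
      rw [ae_iff] at h
      rwa [Measure.restrict_apply' hA] at h
    have hmp' : MeasurePreserving T' m m := mp_inv hm hT'meas hinv₁
    have hpre : ∀ k : ℕ, m ((T'^[k]) ⁻¹' (Bad ∩ A)) = 0 := fun k =>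
      ((hmp'.iterate k).quasiMeasurePreserving).preimage_null hBadnull
    have hgood : ∀ᵐ x ∂ m, ∀ k : ℕ, T'^[k] x ∉ Bad ∩ A := by
      rw [ae_all_iff]
      intro k
      have := measure_eq_zero_iff_ae_notMem.mp (hpre k)
      filter_upwards [this] with x hx
      exact hx
    intro n hn
    filter_upwards [hall, ae_restrict_of_ae hgood, ae_restrict_mem hA] with x hxS hxG hxA
    obtain ⟨j, hjn, hjA, heq⟩ := backward_indicator_sum hinv₂ hn hxA
    have hyG : T'^[j] x ∉ Bad := fun hb => hxG j ⟨hb, hjA⟩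
    have hyS : ∀ n', 1 ≤ n' →
        birkhoffS T (A.indicator 1) n' (T'^[j] x) ≤ M * aSeq T m A n' := by
      by_contra hcon
      exact hyG hcon
    have hjb : birkhoffS T (A.indicator 1) (j+1) (T'^[j] x) ≤ M * aSeq T m A n :=
      calc birkhoffS T (A.indicator 1) (j+1) (T'^[j] x)
          ≤ M * aSeq T m A (j+1) := hyS (j+1) (by omega)
        _ ≤ M * aSeq T m A n := mul_le_mul_of_nonneg_left (hmono (j+1) n hjn) hMpos.le
    have hdec : ∑ k ∈ Finset.range n, A.indicator (1:X→ℝ) (T'^[k] x)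
        = A.indicator (1:X→ℝ) x
          + ∑ k ∈ Finset.Icc 1 (n-1), A.indicator (1:X→ℝ) (T'^[k] x) := by
      have h := range_eq_zero_add_Icc (fun k => A.indicator (1:X→ℝ) (T'^[k] x)) hn
      simpa using h
    have hindx : A.indicator (1:X→ℝ) x = 1 := by
      simp [Set.indicator_of_mem hxA]
    have hback : ∑ k ∈ Finset.Icc 1 (n-1), A.indicator (1:X→ℝ) (T'^[k] x)
        ≤ M * aSeq T m A n := by
      rw [heq] at hdec
      rw [hindx] at hdec
      linarith
    have hforward := hxS n hn
    have hSdef : birkhoffSym T T' (A.indicator 1) n x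
        = birkhoffS T (A.indicator 1) n x
          + ∑ k ∈ Finset.Icc 1 (n-1), A.indicator (1:X→ℝ) (T'^[k] x) := rfl
    have hineq : M * aSeq T m A n ≤ M * aSeqSym T T' m A n :=
      mul_le_mul_of_nonneg_left (h1 n) hMpos.le
    rw [hSdef]
    linarith
end
end

section
/- Let δ=1/5000, let a:ℕ→(0,∞) be nondecreasing with a(n)→∞, let A∈ℬ with 0<m(A)<∞, and let α be a real number with 2−2δ<α<2+2δ. Let ρ∈(0,1/2) and suppose x∈X, an infinite set K⊂ℕ and integers (J_n)_{n∈K} satisfy: (i) for all sufficiently large n, (2−2δ)a(n)m(A) ≤ Σ_n(1_A)(x) ≤ (2+2δ)a(n)m(A); (ii) S_n(1_A)(x)/(α·a(n)) → m(A) as n→∞ along K; (iii) J_n ≤ n for all n∈K and J_n→∞ as n→∞ along K; (iv) liminf_{n→∞, n∈K} a(J_n)/a(n) ≥ ρ. Then liminf_{n→∞, n∈K} S_{J_n}(1_A)(x)/(α·a(J_n)) ≥ (1 − 4δ/ρ)·m(A). -/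
open MeasureTheory Filter Set
open scoped ENNReal Topology

noncomputable section

lemma keyIneq (μ α ρ ε : ℝ) (hμ : 0 < μ)
    (hα₁ : 2 - 2 / 5000 < α) (hα₂ : α < 2 + 2 / 5000)
    (hρ₁ : 0 < ρ) (hρ₂ : ρ < 1 / 2)
    (hεval : ε * (μ + 1) = ρ * (1 / 5000) * μ) :
    (1 - 4 * (1 / 5000) / ρ) * μ * α ≤
      (2 - 2 / 5000) * μ - ((2 + 2 / 5000 - α) * μ + ε * α) / (ρ - ε) := by
  have hμ1 : (0:ℝ) < μ + 1 := by linarith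
  have hε0 : 0 < ε := by
    have : 0 < ρ * (1/5000) * μ := by positivity
    nlinarith
  have hερ : ε < ρ := by nlinarith
  have hD : 0 < ρ - ε := by linarith
  have hcoef : (2 - 2/5000) * ρ * μ + ρ * α - (ρ - 4 * (1/5000)) * μ * α ≤ 2 * μ + 2 := by
    nlinarith [mul_pos hρ₁ hμ, mul_pos hρ₁ (show (0:ℝ) < α by linarith)]
  have hg : 4 * (1/5000) * (1 - 2 * (1/5000)) ≤
      α * (1 + 4 * (1/5000) - ρ) + (2 - 2/5000) * ρ - 2 - 2/5000 := by
    nlinarith [mul_nonneg (show (0:ℝ) ≤ α - (2 - 2/5000) by linarith)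
      (show (0:ℝ) ≤ 1 + 4*(1/5000) - ρ by linarith)]
  have hQ : 0 ≤ (2 - 2/5000) * μ * ρ * (ρ - ε) - ρ * ((2 + 2/5000 - α) * μ + ε * α)
      - (ρ - 4 * (1/5000)) * (ρ - ε) * μ * α := by
    nlinarith [mul_le_mul_of_nonneg_left hcoef (show (0:ℝ) ≤ ε by linarith),
      mul_le_mul_of_nonneg_left hg (show (0:ℝ) ≤ ρ * μ by positivity),
      mul_pos hρ₁ hμ, hεval, mul_pos hε0 hμ]
  have hstep : ((2 + 2/5000 - α) * μ + ε * α) ≤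
      ((2 - 2/5000) * μ - (1 - 4 * (1/5000) / ρ) * μ * α) * (ρ - ε) := by
    rw [← mul_le_mul_iff_right₀ hρ₁]
    have hid : ρ * ((1 - 4 * (1/5000) / ρ) * μ * α) = (ρ - 4 * (1/5000)) * μ * α := by
      field_simp
    nlinarith [hQ, hid]
  have := (div_le_iff₀ hD).mpr hstep
  linarith [this]


/-- **Lemma 2 (bound from below implies bound from above).** With `δ = 1/5000`,
`a` nondecreasing with `a n → ∞`, `A` of positive finite measure, `2−2δ < α < 2+2δ`,
`ρ ∈ (0,1/2)`: if `x ∈ X`, an infinite `K ⊆ ℕ` and `(J_n)_{n∈K}` satisfy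
(i) the two-sided Egorov bounds for `Σ_n(1_A)(x)` eventually, (ii)
`S_n(1_A)(x)/(α a(n)) → m(A)` along `K`, (iii) `J_n ≤ n` on `K` and `J_n → ∞` along `K`,
(iv) `liminf_{n∈K} a(J_n)/a(n) ≥ ρ`, then
`liminf_{n∈K} S_{J_n}(1_A)(x)/(α a(J_n)) ≥ (1 − 4δ/ρ) m(A)`. -/
theorem lower_bound_implies_upper_bound
    {X : Type*} [MeasurableSpace X] (m : Measure X) [SigmaFinite m]
    (T T' : X → X) (hT'meas : Measurable T')
    (hinv₁ : Function.LeftInverse T' T) (hinv₂ : Function.RightInverse T' T)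
    (hT : Ergodic T m) (hcons : Conservative T m) (hXinf : m Set.univ = ⊤)
    (a : ℕ → ℝ) (hamono : Monotone a) (hapos : ∀ n, 0 < a n)
    (hatop : Tendsto a atTop atTop)
    (A : Set X) (hA : MeasurableSet A) (hApos : 0 < m A) (hAfin : m A < ⊤)
    (α : ℝ) (hα₁ : 2 - 2 / 5000 < α) (hα₂ : α < 2 + 2 / 5000)
    (ρ : ℝ) (hρ : ρ ∈ Set.Ioo (0 : ℝ) (1 / 2))
    (x : X) (K : Set ℕ) (hKinf : K.Infinite) (J : ℕ → ℕ)
    (h1 : ∀ᶠ n in atTop,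
      (2 - 2 / 5000) * a n * (m A).toReal ≤ birkhoffSym T T' (A.indicator 1) n x ∧
      birkhoffSym T T' (A.indicator 1) n x ≤ (2 + 2 / 5000) * a n * (m A).toReal)
    (h2 : Tendsto (fun n => birkhoffS T (A.indicator 1) n x / (α * a n))
      (atTop ⊓ Filter.principal K) (nhds (m A).toReal))
    (h3 : ∀ n ∈ K, J n ≤ n)
    (h3' : Tendsto J (atTop ⊓ Filter.principal K) atTop)
    (h4 : ρ ≤ Filter.liminf (fun n => a (J n) / a n) (atTop ⊓ Filter.principal K)) :
    (1 - 4 * (1 / 5000) / ρ) * (m A).toReal ≤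
      Filter.liminf (fun n => birkhoffS T (A.indicator 1) (J n) x / (α * a (J n)))
        (atTop ⊓ Filter.principal K) := by
  obtain ⟨hρ₁, hρ₂⟩ := hρ
  set F := atTop ⊓ Filter.principal K with hF
  have hFne : F.NeBot := by
    rw [hF]
    have : ∃ᶠ n in atTop, n ∈ K := Nat.frequently_atTop_iff_infinite.mpr hKinf
    exact frequently_iff_neBot.mp this
  set μ := (m A).toReal with hμdef
  have hμ : 0 < μ := ENNReal.toReal_pos hApos.ne' hAfin.ne
  have hα0 : 0 < α := by linarith
  set ε : ℝ := ρ * (1 / 5000) * μ / (μ + 1) with hεdef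
  have hμ1 : (0:ℝ) < μ + 1 := by linarith
  have hεval : ε * (μ + 1) = ρ * (1 / 5000) * μ := by
    rw [hεdef]; field_simp
  have hε0 : 0 < ε := by
    rw [hεdef]; positivity
  have hερ : ε < ρ := by nlinarith
  have hD : 0 < ρ - ε := by linarith
  set f := A.indicator (1 : X → ℝ) with hfdef
  have hfnn : ∀ y, 0 ≤ f y := fun y => Set.indicator_nonneg (fun _ _ => zero_le_one) y
  -- eventual facts
  have E0 : ∀ᶠ n in F, n ∈ K := by
    rw [hF, Filter.eventually_inf_principal]
    exact Filter.Eventually.of_forall fun n h => h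
  have E1 : ∀ᶠ n in F,
      birkhoffSym T T' f n x ≤ (2 + 2 / 5000) * a n * μ :=
    ((h1.mono fun n hn => hn.2).filter_mono inf_le_left)
  obtain ⟨N, hN⟩ := Filter.eventually_atTop.mp h1
  have E2 : ∀ᶠ n in F, (2 - 2 / 5000) * a (J n) * μ ≤ birkhoffSym T T' f (J n) x := by
    filter_upwards [h3'.eventually_ge_atTop N] with n hn
    exact (hN (J n) hn).1
  have E3 : ∀ᶠ n in F, μ - ε < birkhoffS T f n x / (α * a n) :=
    h2.eventually (eventually_gt_nhds (by linarith))
  have E4 : ∀ᶠ n in F, ρ - ε < a (J n) / a n := by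
    refine eventually_lt_of_lt_liminf (lt_of_lt_of_le (by linarith) h4) ?_
    exact Filter.isBoundedUnder_of ⟨0, fun n => div_nonneg (hapos _).le (hapos _).le⟩
  have key : ∀ᶠ n in F, (1 - 4 * (1 / 5000) / ρ) * μ ≤
      birkhoffS T f (J n) x / (α * a (J n)) := by
    filter_upwards [E0, E1, E2, E3, E4] with n hK hUn hLJ hSn haJ
    have han : 0 < a n := hapos n
    have haJ0 : 0 < a (J n) := hapos (J n)
    have hαa : 0 < α * a n := mul_pos hα0 (hapos n)
    have hαaJ : 0 < α * a (J n) := mul_pos hα0 (hapos (J n))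
    have hSnge : (μ - ε) * (α * a n) ≤ birkhoffS T f n x :=
      ((lt_div_iff₀ hαa).mp hSn).le
    have haJge : (ρ - ε) * a n ≤ a (J n) :=
      ((lt_div_iff₀ han).mp haJ).le
    -- symmetric sums decompose
    have hdec : ∀ k : ℕ, birkhoffSym T T' f k x =
        birkhoffS T f k x + ∑ i ∈ Finset.Icc 1 (k - 1), f (T'^[i] x) := by
      intro k; rfl
    have hmono : ∑ i ∈ Finset.Icc 1 (J n - 1), f (T'^[i] x) ≤
        ∑ i ∈ Finset.Icc 1 (n - 1), f (T'^[i] x) := by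
      refine Finset.sum_le_sum_of_subset_of_nonneg ?_ (fun i _ _ => hfnn _)
      exact Finset.Icc_subset_Icc_right (Nat.sub_le_sub_right (h3 n hK) 1)
    have hSJ : (2 - 2 / 5000) * a (J n) * μ - (2 + 2 / 5000) * a n * μ
        + (μ - ε) * (α * a n) ≤ birkhoffS T f (J n) x := by
      have e1 := hdec n
      have e2 := hdec (J n)
      linarith
    -- scalar inequality
    have hkey := keyIneq μ α ρ ε hμ hα₁ hα₂ hρ₁ hρ₂ hεval
    set c : ℝ := (2 + 2 / 5000 - α) * μ + ε * α with hcdef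
    have hc0 : 0 < c := by
      rw [hcdef]; nlinarith
    -- c * a n ≤ (c / (ρ - ε)) * a (J n)
    have hdiv : c * a n ≤ c / (ρ - ε) * a (J n) := by
      have h' := mul_le_mul_of_nonneg_left haJge (div_nonneg hc0.le hD.le)
      calc c * a n = c / (ρ - ε) * ((ρ - ε) * a n) := by
            field_simp
        _ ≤ c / (ρ - ε) * a (J n) := h'
    rw [le_div_iff₀ hαaJ]
    have hmul := mul_le_mul_of_nonneg_right hkey haJ0.le
    have e3 : (2 - 2 / 5000) * a (J n) * μ - (2 + 2 / 5000) * a n * μ + (μ - ε) * (α * a n)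
        = (2 - 2 / 5000) * μ * a (J n) - c * a n := by rw [hcdef]; ring
    have e4 : ((2 - 2 / 5000) * μ - c / (ρ - ε)) * a (J n)
        = (2 - 2 / 5000) * μ * a (J n) - c / (ρ - ε) * a (J n) := by ring
    have e5 : (1 - 4 * (1 / 5000) / ρ) * μ * (α * a (J n))
        = (1 - 4 * (1 / 5000) / ρ) * μ * α * a (J n) := by ring
    linarith [hmul, hdiv, hSJ]
  have keyUB : ∀ᶠ n in F, birkhoffS T f (J n) x / (α * a (J n)) ≤ (2 + 2 / 5000) * μ / α := by
    filter_upwards [h3'.eventually_ge_atTop N] with n hn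
    have hub := (hN (J n) hn).2
    have htail : 0 ≤ ∑ i ∈ Finset.Icc 1 (J n - 1), f (T'^[i] x) :=
      Finset.sum_nonneg fun i _ => hfnn _
    have hdec : birkhoffSym T T' f (J n) x =
        birkhoffS T f (J n) x + ∑ i ∈ Finset.Icc 1 (J n - 1), f (T'^[i] x) := rfl
    have hαaJ : 0 < α * a (J n) := mul_pos hα0 (hapos (J n))
    rw [div_le_iff₀ hαaJ]
    have : (2 + 2 / 5000) * μ / α * (α * a (J n)) = (2 + 2 / 5000) * a (J n) * μ := by
      field_simp
    linarith
  exact le_liminf_of_le (isCoboundedUnder_ge_of_eventually_le F keyUB) key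
end
end

section
/- In the admissibility setting (δ=1/5000, T BRE with β̄(T)−β̲(T)<δ, a(n)=a_n(T), α=α(T), sets A and B⊂A with m(B)>(3/4)m(A) and threshold N₀ satisfying the Egorov bounds), if (x,K) is an admissible pair, then limsup_{n→∞, n∈K} a(⌊n/3⌋)/a(n) ≤ 1/√3. -/
open MeasureTheory Filter Set
open scoped ENNReal Topology

noncomputable section

section AuxLemmas

set_option linter.unusedSectionVars false

lemma ind_nonneg {X : Type*} (A : Set X) (y : X) : (0:ℝ) ≤ A.indicator 1 y :=
  Set.indicator_nonneg (fun _ _ => zero_le_one) y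

lemma ind_le_one {X : Type*} (A : Set X) (y : X) : A.indicator (1 : X → ℝ) y ≤ 1 := by
  classical
  by_cases h : y ∈ A <;> simp [Set.indicator_of_mem, Set.indicator_of_notMem, h]

lemma birkhoffS_add {X : Type*} (T : X → X) (g : X → ℝ) (x : X) (p q : ℕ) :
    birkhoffS T g (p + q) x
      = birkhoffS T g p x + ∑ i ∈ Finset.range q, g (T^[p + i] x) := by
  unfold birkhoffS
  have h : ∑ i ∈ Finset.Ico 0 p, g (T^[i] x) + ∑ i ∈ Finset.Ico p (p + q), g (T^[i] x)
      = ∑ i ∈ Finset.Ico 0 (p + q), g (T^[i] x) :=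
    Finset.sum_Ico_consecutive (fun k => g (T^[k] x)) (Nat.zero_le p) (Nat.le_add_right p q)
  have h2 : ∑ i ∈ Finset.Ico p (p + q), g (T^[i] x) = ∑ i ∈ Finset.range q, g (T^[p + i] x) := by
    rw [Finset.sum_Ico_eq_sum_range]
    simp
  rw [Finset.range_eq_Ico, ← h, h2, ← Finset.range_eq_Ico]

lemma birkhoffS_split {X : Type*} (T : X → X) (g : X → ℝ) (x : X) {t n : ℕ}
    (h1 : t ≤ n) (h2 : 1 ≤ n) :
    birkhoffS T g n x = birkhoffS T g t x + ∑ j ∈ Finset.Icc t (n-1), g (T^[j] x) := by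
  obtain ⟨q, rfl⟩ : ∃ q, n = t + q := ⟨n - t, by omega⟩
  rw [birkhoffS_add]
  congr 1
  have hIcc : Finset.Icc t (t + q - 1) = Finset.Ico t (t + q) := by
    ext j; simp only [Finset.mem_Icc, Finset.mem_Ico]; omega
  rw [hIcc, Finset.sum_Ico_eq_sum_range]
  simp

lemma sym_at_iterate {X : Type*} {T T' : X → X} (hinv : Function.LeftInverse T' T)
    (g : X → ℝ) (x : X) {n s : ℕ} (hs : s ≤ n) :
    birkhoffSym T T' g s (T^[n] x)
      = (∑ i ∈ Finset.range s, g (T^[n + i] x))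
        + ∑ j ∈ Finset.Icc (n - s + 1) (n - 1), g (T^[j] x) := by
  unfold birkhoffSym
  congr 1
  · refine Finset.sum_congr rfl fun i _ => ?_
    rw [← Function.iterate_add_apply, Nat.add_comm i n]
  · refine Finset.sum_nbij' (fun i => n - i) (fun j => n - j) ?_ ?_ ?_ ?_ ?_
    · intro i hi
      simp only [Finset.mem_Icc] at hi ⊢
      omega
    · intro j hj
      simp only [Finset.mem_Icc] at hj ⊢
      omega
    · intro i hi
      simp only [Finset.mem_Icc] at hi
      show n - (n - i) = i
      omega
    · intro j hj
      simp only [Finset.mem_Icc] at hj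
      show n - (n - j) = j
      omega
    · intro i hi
      simp only [Finset.mem_Icc] at hi
      have hin : i ≤ n := by omega
      have h : T^[n] x = T^[i] (T^[n - i] x) := by
        rw [← Function.iterate_add_apply]
        congr 1
        omega
      rw [h, hinv.iterate i]

lemma haMono' {X : Type*} [MeasurableSpace X] (m : Measure X) (T : X → X) (A₀ : Set X)
    (a : ℕ → ℝ) (ha : ∀ n, a n = aSeq T m A₀ n) : Monotone a := by
  intro p q hpq
  rw [ha p, ha q]
  unfold aSeq
  have hsum : (∑ k ∈ Finset.range p, (m (A₀ ∩ (T^[k]) ⁻¹' A₀)).toReal)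
      ≤ ∑ k ∈ Finset.range q, (m (A₀ ∩ (T^[k]) ⁻¹' A₀)).toReal :=
    Finset.sum_le_sum_of_subset_of_nonneg (Finset.range_subset_range.2 hpq)
      (fun i _ _ => ENNReal.toReal_nonneg)
  exact div_le_div_of_nonneg_right hsum (by positivity)

lemma ha1pos {X : Type*} [MeasurableSpace X] (m : Measure X) (T : X → X) (A₀ : Set X)
    (hA₀pos : 0 < m A₀) (hA₀fin : m A₀ < ⊤)
    (a : ℕ → ℝ) (ha : ∀ n, a n = aSeq T m A₀ n) : 0 < a 1 := by
  have hmA0 : 0 < (m A₀).toReal := ENNReal.toReal_pos hA₀pos.ne' hA₀fin.ne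
  rw [ha]
  unfold aSeq
  rw [Finset.sum_range_one, Function.iterate_zero, Set.preimage_id, Set.inter_self]
  positivity

lemma ha0 {X : Type*} [MeasurableSpace X] (m : Measure X) (T : X → X) (A₀ : Set X)
    (a : ℕ → ℝ) (ha : ∀ n, a n = aSeq T m A₀ n) : a 0 = 0 := by
  rw [ha]
  unfold aSeq
  simp

lemma haTop {X : Type*} [MeasurableSpace X] (m : Measure X) (T : X → X)
    (hcons : Conservative T m)
    (A₀ : Set X) (hA₀ : MeasurableSet A₀) (hA₀pos : 0 < m A₀) (hA₀fin : m A₀ < ⊤)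
    (M : ℝ)
    (hBRE : ∀ n : ℕ, 1 ≤ n → ∀ᵐ x ∂(m.restrict A₀),
      birkhoffS T (A₀.indicator 1) n x ≤ M * aSeq T m A₀ n)
    (a : ℕ → ℝ) (ha : ∀ n, a n = aSeq T m A₀ n) : Tendsto a atTop atTop := by
  have hmA0 : 0 < (m A₀).toReal := ENNReal.toReal_pos hA₀pos.ne' hA₀fin.ne
  have h1 : ∀ᵐ y ∂(m.restrict A₀), y ∈ A₀ := ae_restrict_mem hA₀
  have h2 : ∀ᵐ y ∂(m.restrict A₀), (y ∈ A₀ → ∃ᶠ j in atTop, T^[j] y ∈ A₀) :=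
    ae_restrict_of_ae (hcons.ae_mem_imp_frequently_image_mem hA₀.nullMeasurableSet)
  have h3 : ∀ᵐ y ∂(m.restrict A₀), ∀ n : ℕ,
      1 ≤ n → birkhoffS T (A₀.indicator 1) n y ≤ M * aSeq T m A₀ n := by
    rw [MeasureTheory.ae_all_iff]
    intro n
    by_cases hn : 1 ≤ n
    · exact (hBRE n hn).mono fun y hy _ => hy
    · exact Filter.Eventually.of_forall fun y h => absurd h hn
  have hne : (m.restrict A₀) ≠ 0 := by
    intro h0
    have h0' : (m.restrict A₀) A₀ = 0 := by rw [h0]; rfl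
    rw [Measure.restrict_apply_self] at h0'
    exact hA₀pos.ne' h0'
  haveI : (ae (m.restrict A₀)).NeBot := ae_neBot.mpr hne
  obtain ⟨x₀, ⟨hx₀A, hx₀f⟩, hx₀b⟩ := ((h1.and h2).and h3).exists
  simp only [← ha] at hx₀b
  have hRinf : {j | T^[j] x₀ ∈ A₀}.Infinite :=
    Nat.frequently_atTop_iff_infinite.mp (hx₀f hx₀A)
  have hS1 : birkhoffS T (A₀.indicator 1) 1 x₀ = 1 := by
    unfold birkhoffS
    rw [Finset.sum_range_one, Function.iterate_zero_apply, Set.indicator_of_mem hx₀A]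
    rfl
  have hM : 0 < M := by
    have hb := hx₀b 1 le_rfl
    rw [hS1] at hb
    by_contra hMn
    push_neg at hMn
    have : M * a 1 ≤ 0 :=
      mul_nonpos_iff.mpr (Or.inr ⟨hMn, (ha1pos m T A₀ hA₀pos hA₀fin a ha).le⟩)
    linarith
  rw [tendsto_atTop_atTop]
  intro C
  obtain ⟨q, hq⟩ := exists_nat_ge (C * M)
  obtain ⟨Fq, hFsub, hFcard⟩ := hRinf.exists_subset_card_eq q
  refine ⟨(Fq.sup id) + 1, fun n hn => ?_⟩
  have hn1 : 1 ≤ n := le_trans (Nat.le_add_left 1 _) hn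
  have hsum : (q:ℝ) ≤ birkhoffS T (A₀.indicator 1) n x₀ := by
    have e1 : (q:ℝ) = ∑ j ∈ Fq, (1:ℝ) := by rw [Finset.sum_const, hFcard]; simp
    have e2 : ∑ j ∈ Fq, (1:ℝ) = ∑ j ∈ Fq, A₀.indicator (1 : X → ℝ) (T^[j] x₀) := by
      refine Finset.sum_congr rfl fun j hj => ?_
      have hjm : T^[j] x₀ ∈ A₀ := hFsub hj
      rw [Set.indicator_of_mem hjm]
      rfl
    have e3 : ∑ j ∈ Fq, A₀.indicator (1 : X → ℝ) (T^[j] x₀)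
        ≤ ∑ j ∈ Finset.range n, A₀.indicator (1 : X → ℝ) (T^[j] x₀) := by
      refine Finset.sum_le_sum_of_subset_of_nonneg (fun j hj => ?_)
        (fun i _ _ => Set.indicator_nonneg (fun _ _ => zero_le_one) _)
      refine Finset.mem_range.mpr ?_
      calc j ≤ Fq.sup id := Finset.le_sup (f := id) hj
      _ < n := by omega
    rw [e1, e2]
    exact e3
  have hb := hx₀b n hn1
  have hCM : C * M ≤ M * a n := le_trans hq (le_trans hsum hb)
  rw [mul_comm M (a n)] at hCM
  exact le_of_mul_le_mul_right hCM hM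

end AuxLemmas

/-- In the admissibility setting, for an admissible pair `(x, K)`:
`limsup_{n∈K} a(⌊n/3⌋)/a(n) ≤ 1/√3`. -/
theorem limsup_a_third
    {X : Type*} [MeasurableSpace X] (m : Measure X) [SigmaFinite m]
    (T T' : X → X) (hT'meas : Measurable T')
    (hinv₁ : Function.LeftInverse T' T) (hinv₂ : Function.RightInverse T' T)
    (hT : Ergodic T m) (hcons : Conservative T m) (hXinf : m Set.univ = ⊤)
    -- `A₀` is a set witnessing bounded rational ergodicity, and `a n = a_n(T) = a_n(A₀)`
    (A₀ : Set X) (hA₀ : MeasurableSet A₀) (hA₀pos : 0 < m A₀) (hA₀fin : m A₀ < ⊤)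
    (M : ℝ)
    (hBRE : ∀ n : ℕ, 1 ≤ n → ∀ᵐ x ∂(m.restrict A₀),
      birkhoffS T (A₀.indicator 1) n x ≤ M * aSeq T m A₀ n)
    (a : ℕ → ℝ) (ha : ∀ n, a n = aSeq T m A₀ n)
    -- the constants `α = α(T)`, `βu = β̄(T)`, `βl = β̲(T)`
    (α βu βl : ℝ)
    (hα : ∀ f : X → ℝ, Integrable f m → (∀ x, 0 ≤ f x) →
      ∀ᵐ x ∂m,
        Filter.limsup (fun n => ENNReal.ofReal (birkhoffS T f n x / a n)) atTop
          = ENNReal.ofReal (α * ∫ x, f x ∂m))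
    (hβu : ∀ f : X → ℝ, Integrable f m → (∀ x, 0 ≤ f x) →
      ∀ᵐ x ∂m,
        Filter.limsup (fun n => ENNReal.ofReal (birkhoffSym T T' f n x / (2 * a n))) atTop
          = ENNReal.ofReal (βu * ∫ x, f x ∂m))
    (hβl : ∀ f : X → ℝ, Integrable f m → (∀ x, 0 ≤ f x) →
      ∀ᵐ x ∂m,
        Filter.liminf (fun n => ENNReal.ofReal (birkhoffSym T T' f n x / (2 * a n))) atTop
          = ENNReal.ofReal (βl * ∫ x, f x ∂m))
    (hgap : βu - βl < 1 / 5000)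
    (hα₁ : 2 - 2 / 5000 < α) (hα₂ : α < 2 + 2 / 5000)
    -- the sets `A` and `B ⊆ A` and the Egorov threshold `N₀`
    (A : Set X) (hA : MeasurableSet A) (hApos : 0 < m A) (hAfin : m A < ⊤)
    (B : Set X) (hB : MeasurableSet B) (hBpos : 0 < m B) (hBsub : B ⊆ A)
    (hB34 : 3 / 4 * (m A).toReal < (m B).toReal)
    (N₀ : ℕ)
    (hEgorov : ∀ n : ℕ, N₀ ≤ n → ∀ x ∈ B,
      ((2 - 2 / 5000) * (m A).toReal ≤
          tailSup (fun N => birkhoffS T (A.indicator 1) N x / a N) n ∧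
        tailSup (fun N => birkhoffS T (A.indicator 1) N x / a N) n ≤
          (2 + 2 / 5000) * (m A).toReal) ∧
      ((2 - 2 / 5000) * a n * (m A).toReal ≤ birkhoffSym T T' (A.indicator 1) n x ∧
        birkhoffSym T T' (A.indicator 1) n x ≤ (2 + 2 / 5000) * a n * (m A).toReal))
    -- `(x, K)` is an admissible pair
    (x : X) (hxB : x ∈ B)
    (hA1 : Tendsto
      (fun n => birkhoffS T (A.indicator 1) n x / birkhoffS T (B.indicator 1) n x)
      atTop (nhds ((m A).toReal / (m B).toReal)))
    (hA2 : ∀ n : ℕ, N₀ ≤ n →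
      (1 - 1 / 5000) * (2 * a n) * (m B).toReal < birkhoffSym T T' (B.indicator 1) n x ∧
      birkhoffSym T T' (B.indicator 1) n x < (1 + 1 / 5000) * (2 * a n) * (m B).toReal)
    (hA3 : Tendsto
      (fun n => tailSup (fun N => birkhoffS T (B.indicator 1) N x / (α * a N)) n)
      atTop (nhds (m B).toReal))
    (K : Set ℕ) (hKinf : K.Infinite)
    (hA4 : ∀ n ∈ K, T^[n] x ∈ B)
    (hA5 : Tendsto (fun n => birkhoffS T (B.indicator 1) n x / (α * a n))
      (atTop ⊓ Filter.principal K) (nhds (m B).toReal))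
    :
    Filter.limsup (fun n => a (n / 3) / a n) (atTop ⊓ Filter.principal K) ≤
      1 / Real.sqrt 3 := by
  classical
  have hmA : 0 < (m A).toReal := ENNReal.toReal_pos hApos.ne' hAfin.ne
  have hBfin : m B < ⊤ := lt_of_le_of_lt (measure_mono hBsub) hAfin
  have hmB : 0 < (m B).toReal := ENNReal.toReal_pos hBpos.ne' hBfin.ne
  have haM : Monotone a := haMono' m T A₀ a ha
  have ha1 : 0 < a 1 := ha1pos m T A₀ hA₀pos hA₀fin a ha
  have hapos : ∀ n, 1 ≤ n → 0 < a n := fun n hn => lt_of_lt_of_le ha1 (haM hn)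
  have haT : Tendsto a atTop atTop := haTop m T hcons A₀ hA₀ hA₀pos hA₀fin M hBRE a ha
  have hαpos : 0 < α := by
    have : (0:ℝ) < 2 - 2/5000 := by norm_num
    linarith
  set F := atTop ⊓ Filter.principal K with hFdef
  haveI hFne : F.NeBot := by
    rw [hFdef, inf_principal_neBot_iff]
    intro U hU
    obtain ⟨N, hN⟩ := mem_atTop_sets.mp hU
    obtain ⟨mm, hmK, hmN⟩ := hKinf.exists_gt N
    exact ⟨mm, hN mm hmN.le, hmK⟩
  have eK : ∀ᶠ n in F, n ∈ K :=
    (Filter.eventually_principal.mpr (fun n hn => hn)).filter_mono inf_le_right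
  have eBig : ∀ᶠ n in F, 3 * N₀ + 9 ≤ n := (eventually_ge_atTop _).filter_mono inf_le_left
  have e1n : ∀ᶠ n in F, 1 ≤ n := (eventually_ge_atTop 1).filter_mono inf_le_left
  have e100 : ∀ᶠ n in F, 100 ≤ a n * (m A).toReal := by
    have h := (haT.eventually_ge_atTop (100 / (m A).toReal)).filter_mono
      (inf_le_left : F ≤ atTop)
    exact h.mono fun n hn => (div_le_iff₀ hmA).mp hn
  -- lower bound on S_n(1_A)(x) along F
  have hSB1 : ∀ n, 1 ≤ n → (1:ℝ) ≤ birkhoffS T (B.indicator 1) n x := by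
    intro n hn
    unfold birkhoffS
    have h0 : (0:ℕ) ∈ Finset.range n := Finset.mem_range.mpr hn
    have h := Finset.single_le_sum (f := fun k => B.indicator (1 : X → ℝ) (T^[k] x))
      (fun i _ => Set.indicator_nonneg (fun _ _ => zero_le_one) _) h0
    simpa [Set.indicator_of_mem hxB] using h
  have t1 : Tendsto
      (fun n => birkhoffS T (A.indicator 1) n x / birkhoffS T (B.indicator 1) n x) F
      (nhds ((m A).toReal / (m B).toReal)) := hA1.mono_left inf_le_left
  have t2 := t1.mul hA5
  have heq : ∀ᶠ n in F,
      (birkhoffS T (A.indicator 1) n x / birkhoffS T (B.indicator 1) n x)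
        * (birkhoffS T (B.indicator 1) n x / (α * a n))
      = birkhoffS T (A.indicator 1) n x / (α * a n) := by
    filter_upwards [e1n] with n hn
    have hSB : birkhoffS T (B.indicator 1) n x ≠ 0 := by
      have := hSB1 n hn; linarith
    rw [div_mul_div_comm, mul_comm (birkhoffS T (A.indicator 1) n x) _,
      mul_div_mul_left _ _ hSB]
  have t3 : Tendsto (fun n => birkhoffS T (A.indicator 1) n x / (α * a n)) F
      (nhds ((m A).toReal)) := by
    have h := t2.congr' heq
    rw [div_mul_cancel₀ _ hmB.ne'] at h
    exact h
  have eSA : ∀ᶠ n in F,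
      (99/100) * (m A).toReal * (α * a n) ≤ birkhoffS T (A.indicator 1) n x := by
    have hlt : (99/100) * (m A).toReal < (m A).toReal := by nlinarith
    filter_upwards [t3.eventually (eventually_gt_nhds hlt), e1n] with n h hn
    have hpos : 0 < α * a n := mul_pos hαpos (hapos n hn)
    rw [lt_div_iff₀ hpos] at h
    linarith
  -- the main eventual estimate
  have hmain : ∀ᶠ n in F, a (n / 3) / a n ≤ 13 / 25 := by
    filter_upwards [eK, eBig, e100, eSA] with n hnK hN h100 hSAn
    have hk1 : N₀ ≤ n / 3 := by omega
    have hk2 : N₀ ≤ n - n / 3 := by omega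
    have hk3 : N₀ ≤ n := by omega
    have hk4 : N₀ ≤ n / 3 + 1 := by omega
    have hk5 : 1 ≤ n / 3 := by omega
    have hk6 : n / 3 + 1 ≤ n - n / 3 := by omega
    have hk7 : n - n / 3 ≤ n := by omega
    have hk8 : 1 ≤ n := by omega
    have hk9 : n / 3 + 1 ≤ n := by omega
    have hTnB : T^[n] x ∈ B := hA4 n hnK
    -- Egorov bounds
    have EG1 : birkhoffSym T T' (A.indicator 1) n (T^[n] x)
        ≤ (2 + 2/5000) * a n * (m A).toReal := (hEgorov n hk3 _ hTnB).2.2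
    have EG2 : (2 - 2/5000) * a (n - n / 3) * (m A).toReal
        ≤ birkhoffSym T T' (A.indicator 1) (n - n / 3) (T^[n] x) :=
      (hEgorov (n - n / 3) hk2 _ hTnB).2.1
    have EG3 : (2 - 2/5000) * a (n / 3 + 1) * (m A).toReal
        ≤ birkhoffSym T T' (A.indicator 1) (n / 3 + 1) x :=
      (hEgorov (n / 3 + 1) hk4 x hxB).2.1
    have EG4 : birkhoffSym T T' (A.indicator 1) n x
        ≤ (2 + 2/5000) * a n * (m A).toReal := (hEgorov n hk3 x hxB).2.2
    -- counting identities
    have P1 : birkhoffS T (A.indicator 1) (2 * n) x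
        = birkhoffS T (A.indicator 1) n x
          + ∑ i ∈ Finset.range n, (A.indicator 1 : X → ℝ) (T^[n + i] x) := by
      rw [two_mul, birkhoffS_add]
    have P2 : birkhoffS T (A.indicator 1) n x
        = birkhoffS T (A.indicator 1) 1 x
          + ∑ j ∈ Finset.Icc 1 (n - 1), (A.indicator 1 : X → ℝ) (T^[j] x) :=
      birkhoffS_split T _ x hk8 hk8
    have P2' : birkhoffS T (A.indicator 1) 1 x ≤ 1 := by
      unfold birkhoffS
      rw [Finset.sum_range_one, Function.iterate_zero_apply]
      exact ind_le_one A x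
    have P2'' : 0 ≤ birkhoffS T (A.indicator 1) 1 x := by
      unfold birkhoffS
      rw [Finset.sum_range_one, Function.iterate_zero_apply]
      exact ind_nonneg A x
    have P3 : birkhoffS T (A.indicator 1) n x
        = birkhoffS T (A.indicator 1) (n / 3 + 1) x
          + ∑ j ∈ Finset.Icc (n / 3 + 1) (n - 1), (A.indicator 1 : X → ℝ) (T^[j] x) :=
      birkhoffS_split T _ x hk9 hk8
    have P4 : (∑ i ∈ Finset.range (n - n / 3), (A.indicator 1 : X → ℝ) (T^[n + i] x))
        ≤ ∑ i ∈ Finset.range n, (A.indicator 1 : X → ℝ) (T^[n + i] x) :=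
      Finset.sum_le_sum_of_subset_of_nonneg (Finset.range_subset_range.mpr hk7)
        (fun i _ _ => ind_nonneg A _)
    have hsym_n : birkhoffSym T T' (A.indicator 1) n (T^[n] x)
        = (∑ i ∈ Finset.range n, (A.indicator 1 : X → ℝ) (T^[n + i] x))
          + ∑ j ∈ Finset.Icc (n - n + 1) (n - 1), (A.indicator 1 : X → ℝ) (T^[j] x) :=
      sym_at_iterate hinv₁ _ x le_rfl
    have hidx1 : n - n + 1 = 1 := by omega
    rw [hidx1] at hsym_n
    have hsym_nk : birkhoffSym T T' (A.indicator 1) (n - n / 3) (T^[n] x)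
        = (∑ i ∈ Finset.range (n - n / 3), (A.indicator 1 : X → ℝ) (T^[n + i] x))
          + ∑ j ∈ Finset.Icc (n - (n - n / 3) + 1) (n - 1),
              (A.indicator 1 : X → ℝ) (T^[j] x) :=
      sym_at_iterate hinv₁ _ x hk7
    have hidx2 : n - (n - n / 3) + 1 = n / 3 + 1 := by omega
    rw [hidx2] at hsym_nk
    -- backward sums at x
    have hsymdef1 : birkhoffSym T T' (A.indicator 1) (n / 3 + 1) x
        = birkhoffS T (A.indicator 1) (n / 3 + 1) x
          + ∑ i ∈ Finset.Icc 1 (n / 3 + 1 - 1), (A.indicator 1 : X → ℝ) (T'^[i] x) := rfl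
    have hidx3 : n / 3 + 1 - 1 = n / 3 := by omega
    rw [hidx3] at hsymdef1
    have hsymdef2 : birkhoffSym T T' (A.indicator 1) n x
        = birkhoffS T (A.indicator 1) n x
          + ∑ i ∈ Finset.Icc 1 (n - 1), (A.indicator 1 : X → ℝ) (T'^[i] x) := rfl
    have hbwdmono : (∑ i ∈ Finset.Icc 1 (n / 3), (A.indicator 1 : X → ℝ) (T'^[i] x))
        ≤ ∑ i ∈ Finset.Icc 1 (n - 1), (A.indicator 1 : X → ℝ) (T'^[i] x) :=
      Finset.sum_le_sum_of_subset_of_nonneg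
        (Finset.Icc_subset_Icc_right (by omega)) (fun i _ _ => ind_nonneg A _)
    -- derived inequalities
    have D1 : birkhoffS T (A.indicator 1) (2 * n) x
        ≤ 1 + (2 + 2/5000) * a n * (m A).toReal := by linarith
    have D2 : (2 - 2/5000) * a (n - n / 3) * (m A).toReal
        ≤ birkhoffS T (A.indicator 1) (2 * n) x
          - birkhoffS T (A.indicator 1) (n / 3 + 1) x := by linarith
    have D3 : (2 - 2/5000) * a (n / 3 + 1) * (m A).toReal
        ≤ birkhoffS T (A.indicator 1) (n / 3 + 1) x
          + (2 + 2/5000) * a n * (m A).toReal - birkhoffS T (A.indicator 1) n x := by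
      linarith
    have D4 : (99/100) * ((2 - 2/5000) * a n) * (m A).toReal
        ≤ birkhoffS T (A.indicator 1) n x := by
      have h1 : (2 - 2/5000) * a n ≤ α * a n :=
        mul_le_mul_of_nonneg_right (le_of_lt hα₁) (hapos n hk8).le
      have h2 : (99/100) * (m A).toReal * ((2 - 2/5000) * a n)
          ≤ (99/100) * (m A).toReal * (α * a n) :=
        mul_le_mul_of_nonneg_left h1 (by positivity)
      calc (99/100) * ((2 - 2/5000) * a n) * (m A).toReal
          = (99/100) * (m A).toReal * ((2 - 2/5000) * a n) := by ring
      _ ≤ (99/100) * (m A).toReal * (α * a n) := h2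
      _ ≤ _ := hSAn
    have D5a : a (n / 3) * (m A).toReal ≤ a (n - n / 3) * (m A).toReal :=
      mul_le_mul_of_nonneg_right (haM (by omega)) hmA.le
    have D5b : a (n / 3) * (m A).toReal ≤ a (n / 3 + 1) * (m A).toReal :=
      mul_le_mul_of_nonneg_right (haM (by omega)) hmA.le
    have key : a (n / 3) * (m A).toReal ≤ (13 / 25 * a n) * (m A).toReal := by
      linarith [D1, D2, D3, D4, D5a, D5b, h100]
    have hfin : a (n / 3) ≤ 13 / 25 * a n := le_of_mul_le_mul_right key hmA
    rw [div_le_iff₀ (hapos n hk8)]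
    exact hfin
  have hnn : ∀ᶠ n in F, (0:ℝ) ≤ a (n / 3) / a n := by
    filter_upwards [e1n] with n hn
    have h3 : 0 ≤ a (n / 3) := by
      rcases Nat.eq_zero_or_pos (n / 3) with h | h
      · rw [h, ha0 m T A₀ a ha]
      · exact (hapos _ h).le
    exact div_nonneg h3 (hapos n hn).le
  have hcob : IsCoboundedUnder (· ≤ ·) F (fun n => a (n / 3) / a n) :=
    Filter.IsBoundedUnder.isCoboundedUnder_le ⟨0, eventually_map.mpr hnn⟩
  have hlim : Filter.limsup (fun n => a (n / 3) / a n) F ≤ 13 / 25 :=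
    Filter.limsup_le_of_le hcob hmain
  refine le_trans hlim ?_
  have hs3 : Real.sqrt 3 ≤ 25 / 13 := by
    rw [show (25:ℝ)/13 = Real.sqrt ((25/13)^2) from (Real.sqrt_sq (by norm_num)).symm]
    exact Real.sqrt_le_sqrt (by norm_num)
  have hs3p : 0 < Real.sqrt 3 := Real.sqrt_pos.mpr (by norm_num)
  calc (13:ℝ)/25 = 1 / (25/13) := by norm_num
  _ ≤ 1 / Real.sqrt 3 := one_div_le_one_div_of_le hs3p hs3
end
end

section
/- In the admissibility setting (δ=1/5000, T BRE with β̄(T)−β̲(T)<δ, a(n)=a_n(T), α=α(T), sets A and B⊂A with m(B)>(3/4)m(A) and threshold N₀ satisfying the Egorov bounds), if (x,K) is an admissible pair, then limsup_{n→∞, n∈K} a(⌊8n/9⌋)/a(n) ≤ 0.94. -/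
open MeasureTheory Filter Set
open scoped ENNReal Topology

noncomputable section

section Aux
variable {X : Type*}

lemma birkhoffS_mono_len (T : X → X) {f : X → ℝ} (hf : ∀ y, 0 ≤ f y) {n n' : ℕ}
    (h : n ≤ n') (x : X) : birkhoffS T f n x ≤ birkhoffS T f n' x :=
  Finset.sum_le_sum_of_subset_of_nonneg (Finset.range_subset_range.2 h) (fun _ _ _ => hf _)

lemma birkhoffSym_mono_fun (T T' : X → X) {f g : X → ℝ} (hfg : ∀ y, f y ≤ g y) (n : ℕ) (x : X) :
    birkhoffSym T T' f n x ≤ birkhoffSym T T' g n x :=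
  add_le_add (Finset.sum_le_sum fun _ _ => hfg _) (Finset.sum_le_sum fun _ _ => hfg _)

lemma sym_shift (T T' : X → X) (hinv : Function.LeftInverse T' T) (f : X → ℝ) (x : X)
    {r n : ℕ} (h1 : 1 ≤ r) (hrn : r ≤ n) :
    birkhoffSym T T' f r (T^[n] x)
      = birkhoffS T f r (T^[n] x) + (birkhoffS T f n x - birkhoffS T f (n - r + 1) x) := by
  have hkey : ∑ k ∈ Finset.Icc 1 (r - 1), f (T'^[k] (T^[n] x))
      = ∑ j ∈ Finset.Ico (n - r + 1) n, f (T^[j] x) := by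
    apply Finset.sum_nbij' (fun k => n - k) (fun j => n - j)
    · intro k hk; simp only [Finset.mem_Icc] at hk; simp only [Finset.mem_Ico]; omega
    · intro j hj; simp only [Finset.mem_Ico] at hj; simp only [Finset.mem_Icc]; omega
    · intro k hk; simp only [Finset.mem_Icc] at hk; omega
    · intro j hj; simp only [Finset.mem_Ico] at hj; omega
    · intro k hk
      simp only [Finset.mem_Icc] at hk
      have h2 : T^[n] x = T^[k] (T^[n - k] x) := by
        rw [← Function.iterate_add_apply]; congr 1; omega
      rw [h2, (hinv.iterate k) _]
  have hsplit : birkhoffS T f (n - r + 1) x + ∑ j ∈ Finset.Ico (n - r + 1) n, f (T^[j] x)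
      = birkhoffS T f n x := by
    unfold birkhoffS
    simp only [Finset.range_eq_Ico]
    exact Finset.sum_Ico_consecutive _ (Nat.zero_le _) (by omega)
  have hdef : birkhoffSym T T' f r (T^[n] x)
      = birkhoffS T f r (T^[n] x) + ∑ k ∈ Finset.Icc 1 (r - 1), f (T'^[k] (T^[n] x)) := rfl
  rw [hdef, hkey]; linarith

lemma window_le (T T' : X → X) (hinv : Function.LeftInverse T' T) {f : X → ℝ}
    (hf : ∀ y, 0 ≤ f y) (x : X) {p L j : ℕ} (h1 : p ≤ j) (h2 : j < p + L) :
    ∑ k ∈ Finset.Ico p (p + L), f (T^[k] x) ≤ birkhoffSym T T' f L (T^[j] x) := by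
  have hsplit : ∑ k ∈ Finset.Ico p j, f (T^[k] x) + ∑ k ∈ Finset.Ico j (p + L), f (T^[k] x)
      = ∑ k ∈ Finset.Ico p (p + L), f (T^[k] x) :=
    Finset.sum_Ico_consecutive _ h1 (le_of_lt h2)
  have hfwd : ∑ k ∈ Finset.Ico j (p + L), f (T^[k] x)
      ≤ ∑ d ∈ Finset.range L, f (T^[d] (T^[j] x)) := by
    rw [Finset.sum_Ico_eq_sum_range]
    calc ∑ d ∈ Finset.range (p + L - j), f (T^[j + d] x)
        = ∑ d ∈ Finset.range (p + L - j), f (T^[d] (T^[j] x)) :=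
          Finset.sum_congr rfl fun d _ => by rw [add_comm, Function.iterate_add_apply]
      _ ≤ _ := Finset.sum_le_sum_of_subset_of_nonneg
          (Finset.range_subset_range.2 (by omega)) (fun _ _ _ => hf _)
  have hbwd : ∑ k ∈ Finset.Ico p j, f (T^[k] x)
      ≤ ∑ d ∈ Finset.Icc 1 (L - 1), f (T'^[d] (T^[j] x)) := by
    have heq : ∑ k ∈ Finset.Ico p j, f (T^[k] x)
        = ∑ d ∈ Finset.Icc 1 (j - p), f (T'^[d] (T^[j] x)) := by
      apply Finset.sum_nbij' (fun k => j - k) (fun d => j - d)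
      · intro k hk; simp only [Finset.mem_Ico] at hk; simp only [Finset.mem_Icc]; omega
      · intro d hd; simp only [Finset.mem_Icc] at hd; simp only [Finset.mem_Ico]; omega
      · intro k hk; simp only [Finset.mem_Ico] at hk; omega
      · intro d hd; simp only [Finset.mem_Icc] at hd; omega
      · intro k hk
        simp only [Finset.mem_Ico] at hk
        have h3 : T^[j] x = T^[j - k] (T^[k] x) := by
          rw [← Function.iterate_add_apply]; congr 1; omega
        rw [h3, (hinv.iterate (j - k)) _]
    rw [heq]
    exact Finset.sum_le_sum_of_subset_of_nonneg
      (Finset.Icc_subset_Icc le_rfl (by omega)) (fun _ _ _ => hf _)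
  have hdef : birkhoffSym T T' f L (T^[j] x)
      = ∑ d ∈ Finset.range L, f (T^[d] (T^[j] x))
        + ∑ d ∈ Finset.Icc 1 (L - 1), f (T'^[d] (T^[j] x)) := rfl
  linarith

lemma sum_range_mul_window (g : ℕ → ℝ) (t L : ℕ) :
    ∑ k ∈ Finset.range (t * L), g k
      = ∑ i ∈ Finset.range t, ∑ k ∈ Finset.Ico (i * L) (i * L + L), g k := by
  induction t with
  | zero => simp
  | succ t ih =>
    rw [Finset.sum_range_succ, ← ih]
    have h1 : (t + 1) * L = t * L + L := by ring
    rw [h1]; simp only [Finset.range_eq_Ico]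
    exact (Finset.sum_Ico_consecutive g (Nat.zero_le (t * L)) (Nat.le_add_right _ L)).symm

end Aux

set_option maxHeartbeats 1000000 in
/-- **Lemma 4.** In the admissibility setting, for an admissible pair `(x, K)`:
`limsup_{n∈K} a(⌊8n/9⌋)/a(n) ≤ 0.94`. -/
theorem limsup_a_eight_ninths
    {X : Type*} [MeasurableSpace X] (m : Measure X) [SigmaFinite m]
    (T T' : X → X) (hT'meas : Measurable T')
    (hinv₁ : Function.LeftInverse T' T) (hinv₂ : Function.RightInverse T' T)
    (hT : Ergodic T m) (hcons : Conservative T m) (hXinf : m Set.univ = ⊤)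
    -- `A₀` is a set witnessing bounded rational ergodicity, and `a n = a_n(T) = a_n(A₀)`
    (A₀ : Set X) (hA₀ : MeasurableSet A₀) (hA₀pos : 0 < m A₀) (hA₀fin : m A₀ < ⊤)
    (M : ℝ)
    (hBRE : ∀ n : ℕ, 1 ≤ n → ∀ᵐ x ∂(m.restrict A₀),
      birkhoffS T (A₀.indicator 1) n x ≤ M * aSeq T m A₀ n)
    (a : ℕ → ℝ) (ha : ∀ n, a n = aSeq T m A₀ n)
    -- the constants `α = α(T)`, `βu = β̄(T)`, `βl = β̲(T)`
    (α βu βl : ℝ)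
    (hα : ∀ f : X → ℝ, Integrable f m → (∀ x, 0 ≤ f x) →
      ∀ᵐ x ∂m,
        Filter.limsup (fun n => ENNReal.ofReal (birkhoffS T f n x / a n)) atTop
          = ENNReal.ofReal (α * ∫ x, f x ∂m))
    (hβu : ∀ f : X → ℝ, Integrable f m → (∀ x, 0 ≤ f x) →
      ∀ᵐ x ∂m,
        Filter.limsup (fun n => ENNReal.ofReal (birkhoffSym T T' f n x / (2 * a n))) atTop
          = ENNReal.ofReal (βu * ∫ x, f x ∂m))
    (hβl : ∀ f : X → ℝ, Integrable f m → (∀ x, 0 ≤ f x) →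
      ∀ᵐ x ∂m,
        Filter.liminf (fun n => ENNReal.ofReal (birkhoffSym T T' f n x / (2 * a n))) atTop
          = ENNReal.ofReal (βl * ∫ x, f x ∂m))
    (hgap : βu - βl < 1 / 5000)
    (hα₁ : 2 - 2 / 5000 < α) (hα₂ : α < 2 + 2 / 5000)
    -- the sets `A` and `B ⊆ A` and the Egorov threshold `N₀`
    (A : Set X) (hA : MeasurableSet A) (hApos : 0 < m A) (hAfin : m A < ⊤)
    (B : Set X) (hB : MeasurableSet B) (hBpos : 0 < m B) (hBsub : B ⊆ A)
    (hB34 : 3 / 4 * (m A).toReal < (m B).toReal)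
    (N₀ : ℕ)
    (hEgorov : ∀ n : ℕ, N₀ ≤ n → ∀ x ∈ B,
      ((2 - 2 / 5000) * (m A).toReal ≤
          tailSup (fun N => birkhoffS T (A.indicator 1) N x / a N) n ∧
        tailSup (fun N => birkhoffS T (A.indicator 1) N x / a N) n ≤
          (2 + 2 / 5000) * (m A).toReal) ∧
      ((2 - 2 / 5000) * a n * (m A).toReal ≤ birkhoffSym T T' (A.indicator 1) n x ∧
        birkhoffSym T T' (A.indicator 1) n x ≤ (2 + 2 / 5000) * a n * (m A).toReal))
    -- `(x, K)` is an admissible pair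
    (x : X) (hxB : x ∈ B)
    (hA1 : Tendsto
      (fun n => birkhoffS T (A.indicator 1) n x / birkhoffS T (B.indicator 1) n x)
      atTop (nhds ((m A).toReal / (m B).toReal)))
    (hA2 : ∀ n : ℕ, N₀ ≤ n →
      (1 - 1 / 5000) * (2 * a n) * (m B).toReal < birkhoffSym T T' (B.indicator 1) n x ∧
      birkhoffSym T T' (B.indicator 1) n x < (1 + 1 / 5000) * (2 * a n) * (m B).toReal)
    (hA3 : Tendsto
      (fun n => tailSup (fun N => birkhoffS T (B.indicator 1) N x / (α * a N)) n)
      atTop (nhds (m B).toReal))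
    (K : Set ℕ) (hKinf : K.Infinite)
    (hA4 : ∀ n ∈ K, T^[n] x ∈ B)
    (hA5 : Tendsto (fun n => birkhoffS T (B.indicator 1) n x / (α * a n))
      (atTop ⊓ Filter.principal K) (nhds (m B).toReal))
    :
    Filter.limsup (fun n => a (8 * n / 9) / a n) (atTop ⊓ Filter.principal K) ≤
      (0.94 : ℝ) := by
  classical
  -- basic positivity
  have hβpos : (0:ℝ) < (m A).toReal := ENNReal.toReal_pos hApos.ne' hAfin.ne
  have hBfin : m B < ⊤ := lt_of_le_of_lt (measure_mono hBsub) hAfin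
  have hbpos : (0:ℝ) < (m B).toReal := ENNReal.toReal_pos hBpos.ne' hBfin.ne
  have hA₀pos' : (0:ℝ) < (m A₀).toReal := ENNReal.toReal_pos hA₀pos.ne' hA₀fin.ne
  have hαpos : (0:ℝ) < α := by linarith
  -- indicator facts
  have hind_nonneg : ∀ (S : Set X) (y : X), 0 ≤ S.indicator (1 : X → ℝ) y :=
    fun S y => Set.indicator_nonneg (fun _ _ => zero_le_one) y
  have hindBA : ∀ y : X, B.indicator (1 : X → ℝ) y ≤ A.indicator (1 : X → ℝ) y := by
    intro y
    by_cases hy : y ∈ B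
    · rw [Set.indicator_of_mem hy, Set.indicator_of_mem (hBsub hy)]
    · rw [Set.indicator_of_notMem hy]; exact hind_nonneg A y
  -- facts about the sequence a
  have ha_nonneg : ∀ n, 0 ≤ a n := by
    intro n; rw [ha]; unfold aSeq
    exact div_nonneg (Finset.sum_nonneg fun k _ => ENNReal.toReal_nonneg) (by positivity)
  have ha_mono : Monotone a := by
    intro n n' h
    rw [ha, ha]; unfold aSeq
    have hnum : (∑ k ∈ Finset.range n, (m (A₀ ∩ (T^[k]) ⁻¹' A₀)).toReal)
        ≤ ∑ k ∈ Finset.range n', (m (A₀ ∩ (T^[k]) ⁻¹' A₀)).toReal :=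
      Finset.sum_le_sum_of_subset_of_nonneg (Finset.range_subset_range.2 h)
        fun _ _ _ => ENNReal.toReal_nonneg
    gcongr
  have ha_pos : ∀ n, 1 ≤ n → 0 < a n := by
    intro n hn
    have h1 : a 1 ≤ a n := ha_mono hn
    have h2 : a 1 = (m A₀).toReal / (m A₀).toReal ^ 2 := by
      rw [ha]; unfold aSeq
      simp
    have : (0:ℝ) < a 1 := by rw [h2]; positivity
    linarith
  -- S_n(1_B)(x) ≥ 1 for n ≥ 1
  have hSB_pos : ∀ n : ℕ, 1 ≤ n → (1:ℝ) ≤ birkhoffS T (B.indicator 1) n x := by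
    intro n hn
    have h0 : birkhoffS T (B.indicator 1) 1 x = 1 := by
      unfold birkhoffS; simp [Set.indicator_of_mem hxB]
    calc (1:ℝ) = birkhoffS T (B.indicator 1) 1 x := h0.symm
      _ ≤ _ := birkhoffS_mono_len T (hind_nonneg B) hn x
  -- the filter is NeBot
  haveI hFne : (atTop ⊓ Filter.principal K).NeBot := by
    rw [inf_principal_neBot_iff]
    intro U hU
    obtain ⟨n, hn⟩ := mem_atTop_sets.mp hU
    obtain ⟨k, hkK, hk⟩ := hKinf.exists_gt n
    exact ⟨k, hn k hk.le, hkK⟩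
  -- the sequence a is unbounded
  have haC : ∀ C : ℝ, ∀ᶠ n in atTop, C ≤ a n := by
    intro C
    obtain ⟨t, htK, htcard⟩ := hKinf.exists_subset_card_eq (⌈3 * (m B).toReal * C⌉₊ + 1)
    set N := max ((t.sup id) + 1) N₀ with hN
    have hces : C ≤ a N := by
      have htsub : t ⊆ Finset.range N := by
        intro k hk
        have : k ≤ t.sup id := Finset.le_sup (f := id) hk
        simp only [Finset.mem_range]; omega
      have hsum : ((⌈3 * (m B).toReal * C⌉₊ + 1 : ℕ) : ℝ)
          ≤ birkhoffS T (B.indicator 1) N x := by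
        unfold birkhoffS
        calc ((⌈3 * (m B).toReal * C⌉₊ + 1 : ℕ) : ℝ) = ∑ _k ∈ t, (1:ℝ) := by
              rw [Finset.sum_const, htcard]; simp
          _ = ∑ k ∈ t, B.indicator (1:X→ℝ) (T^[k] x) := by
              refine Finset.sum_congr rfl fun k hk => ?_
              rw [Set.indicator_of_mem (hA4 k (htK hk))]; simp
          _ ≤ _ := Finset.sum_le_sum_of_subset_of_nonneg htsub
              fun k _ _ => hind_nonneg _ _
      have h2 := (hA2 N (le_max_right _ _)).2
      have h3 : birkhoffS T (B.indicator 1) N x ≤ birkhoffSym T T' (B.indicator 1) N x := by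
        have hdef : birkhoffSym T T' (B.indicator 1) N x
            = birkhoffS T (B.indicator 1) N x
              + ∑ k ∈ Finset.Icc 1 (N - 1), B.indicator (1:X→ℝ) (T'^[k] x) := rfl
        have hb : 0 ≤ ∑ k ∈ Finset.Icc 1 (N - 1), B.indicator (1:X→ℝ) (T'^[k] x) :=
          Finset.sum_nonneg fun k _ => hind_nonneg _ _
        linarith
      have hceil : 3 * (m B).toReal * C ≤ (⌈3 * (m B).toReal * C⌉₊ : ℝ) := Nat.le_ceil _
      have hcast : ((⌈3 * (m B).toReal * C⌉₊ + 1 : ℕ) : ℝ)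
          = (⌈3 * (m B).toReal * C⌉₊ : ℝ) + 1 := by push_cast; ring
      rw [hcast] at hsum
      nlinarith [ha_nonneg N, hbpos]
    filter_upwards [eventually_ge_atTop N] with n hn
    exact le_trans hces (ha_mono hn)
  -- (E1): lower bound on S_n(1_B)(x) along the filter
  have hE1 : ∀ᶠ n in atTop ⊓ Filter.principal K,
      (1 - 1/1000) * α * a n * (m B).toReal ≤ birkhoffS T (B.indicator 1) n x := by
    have h0 : ∀ᶠ n in atTop ⊓ Filter.principal K,
        (1 - 1/1000) * (m B).toReal ≤ birkhoffS T (B.indicator 1) n x / (α * a n) :=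
      hA5.eventually (eventually_ge_nhds (by nlinarith))
    have h1 : ∀ᶠ n in atTop ⊓ Filter.principal K, 1 ≤ n :=
      (eventually_ge_atTop 1).filter_mono inf_le_left
    filter_upwards [h0, h1] with n hn hn1
    have hpos : 0 < α * a n := mul_pos hαpos (ha_pos n hn1)
    rw [le_div_iff₀ hpos] at hn
    calc (1 - 1/1000) * α * a n * (m B).toReal
        = (1 - 1/1000) * (m B).toReal * (α * a n) := by ring
      _ ≤ _ := hn
  -- (E2): lower bound on S_n(1_A)(x) in terms of S_n(1_B)(x)
  have hE2 : ∀ᶠ n in atTop,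
      (1 - 1/1000) * ((m A).toReal / (m B).toReal) * birkhoffS T (B.indicator 1) n x
        ≤ birkhoffS T (A.indicator 1) n x := by
    have hq : (0:ℝ) < (m A).toReal / (m B).toReal := div_pos hβpos hbpos
    have h0 : ∀ᶠ n in atTop,
        (1 - 1/1000) * ((m A).toReal / (m B).toReal)
          ≤ birkhoffS T (A.indicator 1) n x / birkhoffS T (B.indicator 1) n x :=
      hA1.eventually (eventually_ge_nhds (by nlinarith))
    filter_upwards [h0, eventually_ge_atTop 1] with n hn hn1
    have hSB : (0:ℝ) < birkhoffS T (B.indicator 1) n x :=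
      lt_of_lt_of_le one_pos (hSB_pos n hn1)
    rw [le_div_iff₀ hSB] at hn
    exact hn
  -- combined lower bound on S_n(1_A)(x)
  have hSA : ∀ᶠ n in atTop ⊓ Filter.principal K,
      (1 - 1/1000)^2 * (2 - 2/5000) * (a n * (m A).toReal)
        ≤ birkhoffS T (A.indicator 1) n x := by
    filter_upwards [hE1, hE2.filter_mono inf_le_left] with n h1 h2
    have han : 0 ≤ a n := ha_nonneg n
    have hc : (0:ℝ) ≤ (1 - 1/1000) * ((m A).toReal / (m B).toReal) :=
      mul_nonneg (by norm_num) (div_nonneg hβpos.le hbpos.le)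
    have h3 : (1 - 1/1000) * ((m A).toReal / (m B).toReal)
          * ((1 - 1/1000) * α * a n * (m B).toReal)
        ≤ birkhoffS T (A.indicator 1) n x :=
      le_trans (mul_le_mul_of_nonneg_left h1 hc) h2
    have heq : (1 - 1/1000) * ((m A).toReal / (m B).toReal)
          * ((1 - 1/1000) * α * a n * (m B).toReal)
        = (1 - 1/1000)^2 * α * (a n * (m A).toReal) := by
      field_simp
    rw [heq] at h3
    nlinarith [mul_nonneg han hβpos.le]
  -- the main eventual estimate
  have hmain : ∀ᶠ n in atTop ⊓ Filter.principal K, a (8 * n / 9) / a n ≤ (0.94:ℝ) := by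
    have hKev : ∀ᶠ n in atTop ⊓ Filter.principal K, n ∈ K :=
      (eventually_principal.2 (fun n hn => hn)).filter_mono inf_le_right
    filter_upwards [hSA, hE1, (haC (100 / (m A).toReal)).filter_mono inf_le_left,
      (eventually_ge_atTop (9 * N₀ + 18)).filter_mono inf_le_left, hKev]
      with n hSAn hE1n haCn hn9 hnK
    set M := 8 * n / 9 with hMdef
    have h9M : 9 * M ≤ 8 * n := by
      rw [hMdef, mul_comm]; exact Nat.div_mul_le_self _ _
    have hMn : M ≤ n := by omega
    have hM16 : 16 ≤ M := by
      rw [hMdef]; rw [Nat.le_div_iff_mul_le (by norm_num)]; omega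
    have hMN₀ : N₀ ≤ M := by
      rw [hMdef]; rw [Nat.le_div_iff_mul_le (by norm_num)]; omega
    set L := n - M with hLdef
    have hL9 : n ≤ 9 * L := by omega
    have hLN₀ : N₀ ≤ L := by omega
    have hrn : L + 1 ≤ n := by omega
    have hnr : n - (L + 1) + 1 = M := by omega
    have hnN₀ : N₀ ≤ n := by omega
    have hrN₀ : N₀ ≤ L + 1 := by omega
    have hyB : T^[n] x ∈ B := hA4 n hnK
    -- Egorov bounds
    have hSgM := (hEgorov M hMN₀ x hxB).2
    have hSgn := (hEgorov n hnN₀ x hxB).2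
    have hSgny := (hEgorov n hnN₀ _ hyB).2
    have hSgry := (hEgorov (L + 1) hrN₀ _ hyB).2
    -- window bound : S_n(1_B)(x) ≤ 9 (2+2δ) a(L) m(A)
    have hwin : birkhoffS T (B.indicator 1) n x
        ≤ 9 * ((2 + 2/5000) * a L * (m A).toReal) := by
      have hbox : ∀ i : ℕ,
          ∑ k ∈ Finset.Ico (i * L) (i * L + L), B.indicator (1:X→ℝ) (T^[k] x)
            ≤ (2 + 2/5000) * a L * (m A).toReal := by
        intro i
        by_cases hex : ∃ j ∈ Finset.Ico (i * L) (i * L + L), T^[j] x ∈ B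
        · obtain ⟨j, hj, hjB⟩ := hex
          simp only [Finset.mem_Ico] at hj
          have h1 := window_le T T' hinv₁ (hind_nonneg B) x hj.1 hj.2
          have h2 : birkhoffSym T T' (B.indicator 1) L (T^[j] x)
              ≤ birkhoffSym T T' (A.indicator 1) L (T^[j] x) :=
            birkhoffSym_mono_fun _ _ hindBA _ _
          have h3 := (hEgorov L hLN₀ (T^[j] x) hjB).2.2
          linarith
        · push_neg at hex
          have h0 : ∑ k ∈ Finset.Ico (i * L) (i * L + L), B.indicator (1:X→ℝ) (T^[k] x)
              = 0 := Finset.sum_eq_zero fun k hk => Set.indicator_of_notMem (hex k hk) _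
          rw [h0]
          have := mul_nonneg (mul_nonneg (by norm_num : (0:ℝ) ≤ 2 + 2/5000) (ha_nonneg L))
            hβpos.le
          linarith
      have hcover : birkhoffS T (B.indicator 1) n x
          ≤ ∑ i ∈ Finset.range 9, ∑ k ∈ Finset.Ico (i * L) (i * L + L),
              B.indicator (1:X→ℝ) (T^[k] x) := by
        rw [← sum_range_mul_window]
        exact Finset.sum_le_sum_of_subset_of_nonneg (Finset.range_subset_range.2 hL9)
          fun k _ _ => hind_nonneg _ _
      calc birkhoffS T (B.indicator 1) n x ≤ _ := hcover
        _ ≤ ∑ _i ∈ Finset.range 9, ((2 + 2/5000) * a L * (m A).toReal) :=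
            Finset.sum_le_sum fun i _ => hbox i
        _ = 9 * ((2 + 2/5000) * a L * (m A).toReal) := by
            rw [Finset.sum_const, Finset.card_range, nsmul_eq_mul]; norm_num
    -- identities from the inverse map
    have hid_r : birkhoffSym T T' (A.indicator 1) (L + 1) (T^[n] x)
        = birkhoffS T (A.indicator 1) (L + 1) (T^[n] x)
          + (birkhoffS T (A.indicator 1) n x - birkhoffS T (A.indicator 1) M x) := by
      have h := sym_shift T T' hinv₁ (A.indicator 1) x (Nat.le_add_left 1 L) hrn
      rw [hnr] at h; exact h
    have hid_n : birkhoffSym T T' (A.indicator 1) n (T^[n] x)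
        = birkhoffS T (A.indicator 1) n (T^[n] x)
          + (birkhoffS T (A.indicator 1) n x - 1) := by
      have h := sym_shift T T' hinv₁ (A.indicator 1) x (show 1 ≤ n by omega) le_rfl
      have he : n - n + 1 = 1 := by omega
      rw [he] at h
      have hS1 : birkhoffS T (A.indicator 1) 1 x = 1 := by
        unfold birkhoffS; simp [Set.indicator_of_mem (hBsub hxB)]
      rw [hS1] at h; exact h
    -- backward sums are monotone : Σ_M - S_M ≤ Σ_n - S_n at x
    have hback : birkhoffSym T T' (A.indicator 1) M x - birkhoffS T (A.indicator 1) M x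
        ≤ birkhoffSym T T' (A.indicator 1) n x - birkhoffS T (A.indicator 1) n x := by
      have h1 : birkhoffSym T T' (A.indicator 1) M x
          = birkhoffS T (A.indicator 1) M x
            + ∑ k ∈ Finset.Icc 1 (M - 1), A.indicator (1:X→ℝ) (T'^[k] x) := rfl
      have h2 : birkhoffSym T T' (A.indicator 1) n x
          = birkhoffS T (A.indicator 1) n x
            + ∑ k ∈ Finset.Icc 1 (n - 1), A.indicator (1:X→ℝ) (T'^[k] x) := rfl
      have h3 : ∑ k ∈ Finset.Icc 1 (M - 1), A.indicator (1:X→ℝ) (T'^[k] x)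
          ≤ ∑ k ∈ Finset.Icc 1 (n - 1), A.indicator (1:X→ℝ) (T'^[k] x) :=
        Finset.sum_le_sum_of_subset_of_nonneg
          (Finset.Icc_subset_Icc le_rfl (by omega)) fun k _ _ => hind_nonneg _ _
      linarith
    have hfwd_mono : birkhoffS T (A.indicator 1) (L + 1) (T^[n] x)
        ≤ birkhoffS T (A.indicator 1) n (T^[n] x) :=
      birkhoffS_mono_len T (hind_nonneg A) hrn _
    -- combine: (2-2δ) a M β ≤ 2(2+2δ) a n β + 1 - (2-2δ) a(L+1) β - S_n(1_A)(x)
    have hfin : (2 - 2/5000) * (a M * (m A).toReal)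
        ≤ 2 * (2 + 2/5000) * (a n * (m A).toReal) + 1
          - (2 - 2/5000) * (a (L + 1) * (m A).toReal)
          - birkhoffS T (A.indicator 1) n x := by
      have e1 := hSgM.1
      have e2 := hSgn.2
      have e3 := hSgny.2
      have e4 := hSgry.1
      linarith [e1, e2, e3, e4, hid_r, hid_n, hback, hfwd_mono]
    -- lower bound on a(L) relative to a(n)
    have haL : (1 - 1/1000) * (2 - 2/5000) * (3/4) * (a n * (m A).toReal)
        ≤ 9 * ((2 + 2/5000) * (a L * (m A).toReal)) := by
      have hnn : (0:ℝ) ≤ (1 - 1/1000) * α * a n :=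
        mul_nonneg (mul_nonneg (by norm_num) hαpos.le) (ha_nonneg n)
      have h1 : (1 - 1/1000) * α * a n * (3/4 * (m A).toReal)
          ≤ (1 - 1/1000) * α * a n * (m B).toReal :=
        mul_le_mul_of_nonneg_left hB34.le hnn
      have h2 : (1 - 1/1000) * (2 - 2/5000) * a n * (3/4 * (m A).toReal)
          ≤ (1 - 1/1000) * α * a n * (3/4 * (m A).toReal) := by
        nlinarith [ha_nonneg n, hβpos.le, hα₁]
      linarith [hE1n, hwin, h1, h2]
    have h100 : (100:ℝ) ≤ a n * (m A).toReal := by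
      have := (div_le_iff₀ hβpos).mp haCn
      linarith
    have harβ : a L * (m A).toReal ≤ a (L + 1) * (m A).toReal :=
      mul_le_mul_of_nonneg_right (ha_mono (Nat.le_succ L)) hβpos.le
    have hSA_lb := hSAn
    -- final arithmetic
    have hgoalβ : a M * (m A).toReal ≤ 0.94 * (a n * (m A).toReal) := by
      linarith [hfin, hSA_lb, haL, harβ, h100]
    have hanpos : 0 < a n := ha_pos n (by omega)
    rw [div_le_iff₀ hanpos]
    nlinarith [hgoalβ, hβpos]
  have h0 : ∀ᶠ n in atTop ⊓ Filter.principal K, (0:ℝ) ≤ a (8 * n / 9) / a n := by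
    filter_upwards [] with n
    exact div_nonneg (ha_nonneg _) (ha_nonneg n)
  exact Filter.limsup_le_of_le (isCoboundedUnder_le_of_eventually_le _ h0) hmain
end
end
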